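/- Let X be a compact metric space, T : X → X a minimal homeomorphism, ρ : X → ℝ continuous, and F : X × ℝ → X × ℝ the cylindrical cascade F(x,v) = (T(x), v + ρ(x)), with Birkhoff sums ρ_n : X → ℝ defined by F^n(x,v) = (T^n(x), v + ρ_n(x)) for all n ∈ ℤ (so ρ_n(x) = Σ_{j=0}^{n−1} ρ(T^j(x)) for n ≥ 0 and ρ_{−n}(x) = −ρ_n(T^{−n}(x))). Assume that for every x ∈ X the two-sided sequence (ρ_n(x))_{n∈ℤ} is unbounded from above and unbounded from below. Then every orbit of F is proper: for every x ∈ X, |ρ_n(x)| → ∞ as |n| → ∞. -/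

import Mathlib

open Filter Topology

private theorem core_lemma' {X : Type*} [MetricSpace X] [CompactSpace X]
    (S : ℤ → X → ℝ) (hcont : ∀ n : ℤ, Continuous (S n))
    (φ : ℤ → X) (a : ℤ → ℝ)
    (hrel : ∀ c n : ℤ, S n (φ c) = a (c + n) - a c)
    (B : ℝ) (hstep : ∀ n : ℤ, |a (n + 1) - a n| ≤ B)
    (h0 : a 0 = 0)
    (K : ℝ) (hinf : ∀ N : ℤ, ∃ n : ℤ, N ≤ n ∧ |a n| < K) :
    ∃ z : X, ∀ n : ℤ, -1 ≤ S n z := by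
  have hB0 : 0 ≤ B := le_trans (abs_nonneg _) (hstep 0)
  obtain ⟨n0, -, hn0⟩ := hinf 0
  have hK0 : 0 < K := lt_of_le_of_lt (abs_nonneg _) hn0
  -- Lipschitz bound along the orbit
  have hlipN : ∀ (p : ℤ) (k : ℕ), |a (p + k) - a p| ≤ B * k := by
    intro p k
    induction k with
    | zero => simp
    | succ k ih =>
        have h1 := hstep (p + k)
        have e1 : p + ((k : ℕ) + 1 : ℕ) = (p + (k : ℤ)) + 1 := by push_cast; ring
        have e2 : a (p + ((k : ℕ) + 1 : ℕ)) - a p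
            = (a ((p + (k : ℤ)) + 1) - a (p + (k : ℤ))) + (a (p + (k : ℤ)) - a p) := by
          rw [e1]; ring
        calc |a (p + ((k : ℕ) + 1 : ℕ)) - a p|
            ≤ |a ((p + (k : ℤ)) + 1) - a (p + (k : ℤ))| + |a (p + (k : ℤ)) - a p| := by
              rw [e2]; exact abs_add_le _ _
          _ ≤ B + B * k := add_le_add h1 ih
          _ = B * ((k : ℕ) + 1 : ℕ) := by push_cast; ring
  have hlip : ∀ p q : ℤ, p ≤ q → |a q - a p| ≤ B * ((q : ℝ) - (p : ℝ)) := by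
    intro p q h
    obtain ⟨k, hk⟩ := Int.le.dest h
    subst hk
    have := hlipN p k
    push_cast
    push_cast at this
    convert this using 2
    ring
  -- main construction : approximate two-sided local minima at arbitrarily deep scales
  have main : ∀ D : ℕ, ∃ c : ℤ, ∀ i : ℤ, |i| ≤ (D : ℤ) → -1 ≤ a (c + i) - a c := by
    intro D
    by_cases hLB : ∃ L : ℝ, ∀ n : ℤ, 0 ≤ n → L ≤ a n
    · -- sums bounded below on [0,∞) : descent argument
      obtain ⟨L, hL⟩ := hLB
      by_contra hbad
      push_neg at hbad
      -- hbad : ∀ c, ∃ i, |i| ≤ D ∧ a (c+i) - a c < -1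
      set j : ℕ := ⌈K - L⌉₊ with hj
      obtain ⟨c0, hc0N, hc0b⟩ := hinf (((j : ℤ) + 1) * D)
      have chain : ∀ k : ℕ, k ≤ j →
          ∃ c : ℤ, ((j : ℤ) + 1 - k) * D ≤ c ∧ a c ≤ a c0 - k := by
        intro k hk
        induction k with
        | zero => exact ⟨c0, by simpa using hc0N, by simp⟩
        | succ k ih =>
            obtain ⟨c, hc1, hc2⟩ := ih (Nat.le_of_succ_le hk)
            obtain ⟨i, hi1, hi2⟩ := hbad c
            refine ⟨c + i, ?_, ?_⟩
            · have h1 : -(D : ℤ) ≤ i := (abs_le.mp hi1).1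
              have e : ((j : ℤ) + 1 - ((k : ℕ) + 1 : ℕ)) * D
                  = ((j : ℤ) + 1 - k) * D - D := by push_cast; ring
              rw [e]
              linarith
            · push_cast
              linarith
      obtain ⟨c, hc1, hc2⟩ := chain j le_rfl
      have hc0' : (0 : ℤ) ≤ c := by
        have h1 : ((j : ℤ) + 1 - j) * D = D := by ring
        omega
      have h2 : L ≤ a c := hL c hc0'
      have h3 : a c0 < K := lt_of_le_of_lt (le_abs_self _) hc0b
      have h4 : (K - L : ℝ) ≤ j := Nat.le_ceil _
      linarith
    · -- sums unbounded below on [0,∞) : argmin on a finite window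
      push_neg at hLB
      obtain ⟨u, hu0, hu⟩ := hLB (-(K + B * D + 1))
      obtain ⟨t, hut, ht⟩ := hinf u
      have h0t : (0 : ℤ) ≤ t := le_trans hu0 hut
      obtain ⟨c, hcmem, hcmin⟩ :=
        (Finset.Icc (0 : ℤ) t).exists_min_image a ⟨0, by simp [h0t]⟩
      rw [Finset.mem_Icc] at hcmem
      have hac : a c ≤ a u := hcmin u (by rw [Finset.mem_Icc]; exact ⟨hu0, hut⟩)
      have hacH : a c < -(K + B * D + 1) := lt_of_le_of_lt hac hu
      have hcD : (D : ℤ) ≤ c := by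
        by_contra h
        push_neg at h
        have h1 : |a c - a 0| ≤ B * ((c : ℝ) - ((0 : ℤ) : ℝ)) := hlip 0 c hcmem.1
        have h2 : B * ((c : ℝ) - ((0 : ℤ) : ℝ)) ≤ B * D := by
          apply mul_le_mul_of_nonneg_left _ hB0
          have : (c : ℝ) ≤ (D : ℝ) := by exact_mod_cast h.le
          simpa using this
        rw [h0] at h1
        have h3 : -(B * ((c : ℝ) - ((0 : ℤ) : ℝ))) ≤ a c - 0 := neg_le_of_abs_le h1
        linarith
      have hct : c + (D : ℤ) ≤ t := by
        by_contra h
        push_neg at h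
        have h1 : |a t - a c| ≤ B * ((t : ℝ) - (c : ℝ)) := hlip c t hcmem.2
        have h2 : B * ((t : ℝ) - (c : ℝ)) ≤ B * D := by
          apply mul_le_mul_of_nonneg_left _ hB0
          have : (t : ℝ) - (c : ℝ) ≤ (D : ℝ) := by
            have ht' : t - c ≤ (D : ℤ) := by omega
            exact_mod_cast ht'
          exact this
        have h3 : a t - a c ≤ B * ((t : ℝ) - (c : ℝ)) := le_of_abs_le h1
        have h4 : -K < a t := neg_lt_of_abs_lt ht
        linarith
      refine ⟨c, fun i hi => ?_⟩
      have hi1 := (abs_le.mp hi).1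
      have hi2 := (abs_le.mp hi).2
      have hmem : c + i ∈ Finset.Icc (0 : ℤ) t := by
        rw [Finset.mem_Icc]; constructor <;> omega
      have := hcmin (c + i) hmem
      linarith
  -- pass to a limit point
  choose c hc using main
  obtain ⟨z, -, ψ, hψ, htend⟩ :=
    isCompact_univ.tendsto_subseq (x := fun D => φ (c D)) (fun D => Set.mem_univ _)
  refine ⟨z, fun n => ?_⟩
  have htend' : Tendsto (fun k => S n (φ (c (ψ k)))) atTop (𝓝 (S n z)) :=
    ((hcont n).tendsto z).comp htend
  refine ge_of_tendsto htend' ?_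
  filter_upwards [eventually_ge_atTop n.natAbs] with k hk
  rw [hrel]
  apply hc (ψ k) n
  have h1 : k ≤ ψ k := hψ.le_apply
  have h2 : |n| = (n.natAbs : ℤ) := Int.abs_eq_natAbs n
  omega

/-- For a cylindrical cascade `F(x,v) = (T x, v + ρ x)` over a minimal homeomorphism of a
compact metric space, if every two-sided sequence of Birkhoff sums `(ρ_n(x))_{n ∈ ℤ}` is
unbounded from above and from below, then every orbit is proper:
`|ρ_n(x)| → ∞` as `|n| → ∞`. -/
theorem cascade_all_orbits_proper
    {X : Type*} [MetricSpace X] [CompactSpace X]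
    (T : X ≃ₜ X)
    (hT : ∀ x : X, Dense {y : X | ∃ n : ℤ, (T.toEquiv ^ n) x = y})
    (ρ : X → ℝ) (hρ : Continuous ρ)
    (R : ℤ → X → ℝ)
    (hRpos : ∀ (n : ℕ) (x : X),
      R n x = ∑ j ∈ Finset.range n, ρ ((T.toEquiv ^ (j : ℤ)) x))
    (hRneg : ∀ (n : ℕ) (x : X),
      R (-(n : ℤ)) x = - R n ((T.toEquiv ^ (-(n : ℤ))) x))
    (hunbdd : ∀ x : X, ¬ BddAbove (Set.range fun n : ℤ => R n x) ∧
      ¬ BddBelow (Set.range fun n : ℤ => R n x)) :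
    ∀ x : X, Filter.Tendsto (fun n : ℤ => |R n x|) Filter.cofinite Filter.atTop := by
  intro x
  by_contra hcon
  -- basic facts about R
  have hR0 : ∀ y : X, R 0 y = 0 := by
    intro y
    simpa using hRpos 0 y
  have key1 : ∀ (n : ℤ) (y : X), R (n + 1) y = R n y + ρ ((T.toEquiv ^ n) y) := by
    intro n y
    rcases le_or_gt 0 n with h | h
    · obtain ⟨m, rfl⟩ := Int.eq_ofNat_of_zero_le h
      have e : (m : ℤ) + 1 = ((m + 1 : ℕ) : ℤ) := by push_cast; ring
      rw [e, hRpos (m + 1) y, hRpos m y, Finset.sum_range_succ]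
    · obtain ⟨m, rfl⟩ : ∃ m : ℕ, n = -((m : ℤ) + 1) := ⟨(-(n + 1)).toNat, by omega⟩
      have e1 : -((m : ℤ) + 1) + 1 = -(m : ℤ) := by ring
      have e2 : -((m : ℤ) + 1) = -((m + 1 : ℕ) : ℤ) := by push_cast; ring
      rw [e1, hRneg m y, e2, hRneg (m + 1) y, ← e2]
      set y1 := (T.toEquiv ^ (-((m : ℤ) + 1))) y with hy1
      have e3 : (T.toEquiv ^ (-(m : ℤ))) y = T.toEquiv y1 := by
        rw [hy1, show (-(m : ℤ)) = 1 + (-((m : ℤ) + 1)) by ring, zpow_add, zpow_one,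
          Equiv.Perm.mul_apply]
      rw [e3, hRpos m, hRpos (m + 1), Finset.sum_range_succ']
      have e4 : ∀ j : ℕ, ρ ((T.toEquiv ^ ((j + 1 : ℕ) : ℤ)) y1)
          = ρ ((T.toEquiv ^ (j : ℤ)) (T.toEquiv y1)) := by
        intro j
        congr 1
      rw [Finset.sum_congr rfl (fun j _ => e4 j)]
      have e5 : (T.toEquiv ^ ((0 : ℕ) : ℤ)) y1 = y1 := by simp
      rw [e5]
      ring
  have hcoc : ∀ (c n : ℤ) (y : X), R (c + n) y = R c y + R n ((T.toEquiv ^ c) y) := by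
    intro c n y
    induction n using Int.induction_on with
    | zero => simp [hR0]
    | succ k ih =>
        have e1 : c + ((k : ℤ) + 1) = (c + k) + 1 := by ring
        rw [e1, key1 (c + k) y, ih, key1 k ((T.toEquiv ^ c) y)]
        have e2 : (T.toEquiv ^ (c + (k : ℤ))) y = (T.toEquiv ^ (k : ℤ)) ((T.toEquiv ^ c) y) := by
          rw [show c + (k : ℤ) = (k : ℤ) + c by ring, zpow_add, Equiv.Perm.mul_apply]
        rw [e2]
        ring
    | pred k ih =>
        have e1 : c + (-(k : ℤ) - 1) = (c + (-(k : ℤ) - 1)) := rfl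
        have h1 := key1 (c + (-(k : ℤ) - 1)) y
        have h2 := key1 (-(k : ℤ) - 1) ((T.toEquiv ^ c) y)
        have e2 : c + (-(k : ℤ) - 1) + 1 = c + -(k : ℤ) := by ring
        have e3 : -(k : ℤ) - 1 + 1 = -(k : ℤ) := by ring
        rw [e2] at h1
        rw [e3] at h2
        have e4 : (T.toEquiv ^ (c + (-(k : ℤ) - 1))) y
            = (T.toEquiv ^ (-(k : ℤ) - 1)) ((T.toEquiv ^ c) y) := by
          rw [show c + (-(k : ℤ) - 1) = (-(k : ℤ) - 1) + c by ring, zpow_add,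
            Equiv.Perm.mul_apply]
        rw [e4] at h1
        linarith [ih]
  have hcontPow : ∀ n : ℤ, Continuous fun y : X => (T.toEquiv ^ n) y := by
    intro n
    induction n using Int.induction_on with
    | zero => simpa using continuous_id'
    | succ k ih =>
        have e : (fun y : X => (T.toEquiv ^ ((k : ℤ) + 1)) y)
            = (fun y : X => (T.toEquiv ^ (k : ℤ)) y) ∘ fun y : X => T y := by
          funext y
          simp [zpow_add, Equiv.Perm.mul_apply]
        rw [e]
        exact ih.comp T.continuous
    | pred k ih =>
        have e : (fun y : X => (T.toEquiv ^ (-(k : ℤ) - 1)) y)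
            = (fun y : X => (T.toEquiv ^ (-(k : ℤ)))  y) ∘ fun y : X => T.symm y := by
          funext y
          have : (-(k : ℤ) - 1) = (-(k : ℤ)) + (-1) := by ring
          rw [this, zpow_add, Equiv.Perm.mul_apply]
          congr 1
        rw [e]
        exact ih.comp T.symm.continuous
  have hcontR : ∀ n : ℤ, Continuous fun y : X => R n y := by
    have hnat : ∀ m : ℕ, Continuous fun y : X => R m y := by
      intro m
      have e : (fun y : X => R m y)
          = fun y : X => ∑ j ∈ Finset.range m, ρ ((T.toEquiv ^ (j : ℤ)) y) :=
        funext (hRpos m)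
      rw [e]
      exact continuous_finset_sum _ fun j _ => hρ.comp (hcontPow j)
    intro n
    rcases Int.eq_nat_or_neg n with ⟨m, rfl | rfl⟩
    · exact hnat m
    · have e : (fun y : X => R (-(m : ℤ)) y)
          = fun y : X => - R m ((T.toEquiv ^ (-(m : ℤ))) y) := funext (hRneg m)
      rw [e]
      exact ((hnat m).comp (hcontPow (-(m : ℤ)))).neg
  -- bound on ρ
  have hne : Nonempty X := ⟨x⟩
  obtain ⟨w, -, hw⟩ := isCompact_univ.exists_isMaxOn (Set.univ_nonempty)
    ((continuous_abs.comp hρ).continuousOn)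
  set B : ℝ := |ρ w| with hB
  have hBb : ∀ y : X, |ρ y| ≤ B := fun y => hw (Set.mem_univ y)
  -- extract infinitely many bounded times
  rw [Filter.tendsto_atTop] at hcon
  push_neg at hcon
  obtain ⟨b, hb⟩ := hcon
  rw [Filter.frequently_cofinite_iff_infinite] at hb
  -- hb : {n : ℤ | |R n x| < b}.Infinite
  by_cases hP : Set.Infinite {n : ℤ | 0 ≤ n ∧ |R n x| < b}
  · -- forward case
    have hinfF : ∀ N : ℤ, ∃ n : ℤ, N ≤ n ∧ |R n x| < b := by
      intro N
      by_contra h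
      push_neg at h
      refine hP (Set.Finite.subset (Set.finite_Icc 0 N) ?_)
      intro n hn
      rw [Set.mem_Icc]
      refine ⟨hn.1, ?_⟩
      by_contra h2
      push_neg at h2
      exact absurd (h n h2.le) (not_le.mpr hn.2)
    obtain ⟨z, hz⟩ := core_lemma' (fun n z => R n z) hcontR
      (fun c => (T.toEquiv ^ c) x) (fun n => R n x)
      (by
        intro c n
        show R n ((T.toEquiv ^ c) x) = R (c + n) x - R c x
        rw [hcoc c n x]
        ring)
      B
      (by
        intro n
        have e : R (n + 1) x - R n x = ρ ((T.toEquiv ^ n) x) := by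
          rw [key1 n x]; ring
        rw [e]
        exact hBb _)
      (hR0 x) b hinfF
    exact (hunbdd z).2 ⟨-1, by rintro r ⟨n, rfl⟩; exact hz n⟩
  · -- backward case
    have hNg : Set.Infinite {n : ℤ | n ≤ 0 ∧ |R n x| < b} := by
      have h1 : ({n : ℤ | |R n x| < b} \ {n : ℤ | 0 ≤ n ∧ |R n x| < b}).Infinite :=
        hb.diff (Set.not_infinite.mp hP)
      refine h1.mono ?_
      rintro n ⟨hn1, hn2⟩
      simp only [Set.mem_setOf_eq, not_and] at hn2 ⊢
      constructor
      · by_contra h3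
        push_neg at h3
        exact hn2 h3.le hn1
      · exact hn1
    have hinfB : ∀ N : ℤ, ∃ n : ℤ, N ≤ n ∧ |R (-n) x| < b := by
      intro N
      by_contra h
      push_neg at h
      refine hNg (Set.Finite.subset (Set.finite_Icc (-N) 0) ?_)
      intro m hm
      rw [Set.mem_Icc]
      refine ⟨?_, hm.1⟩
      by_contra h2
      push_neg at h2
      have h3 : N ≤ -m := by omega
      have := h (-m) h3
      rw [neg_neg] at this
      exact absurd this (not_le.mpr hm.2)
    obtain ⟨z, hz⟩ := core_lemma' (fun n z => R (-n) z) (fun n => hcontR (-n))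
      (fun c => (T.toEquiv ^ (-c)) x) (fun n => R (-n) x)
      (by
        intro c n
        show R (-n) ((T.toEquiv ^ (-c)) x) = R (-(c + n)) x - R (-c) x
        have h1 := hcoc (-c) (-n) x
        have e : -c + -n = -(c + n) := by ring
        rw [e] at h1
        rw [h1]
        ring)
      B
      (by
        intro n
        have h1 := key1 (-(n + 1)) x
        have e : -(n + 1) + 1 = -n := by ring
        rw [e] at h1
        have e2 : R (-(n + 1)) x - R (-n) x = -(ρ ((T.toEquiv ^ (-(n + 1))) x)) := by
          rw [h1]; ring
        rw [e2, abs_neg]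
        exact hBb _)
      (by simpa using hR0 x) b hinfB
    refine (hunbdd z).2 ⟨-1, ?_⟩
    rintro r ⟨n, rfl⟩
    have := hz (-n)
    rwa [neg_neg] at this
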